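/- Let D_n be the n-th binary diamond graph with its graph metric. The Lipschitz free space F(D_n) contains a 1-complemented subspace linearly isometric to ℓ₁^k with k = 2·4^{n−1}. -/

import Mathlib

open Finset

/-- The Lipschitz-free (Kantorovich–Rubinstein) norm of a molecule on a finite
metric space, expressed via duality with `1`-Lipschitz functions. -/
noncomputable def freeNorm (M : Type*) [MetricSpace M] [Fintype M] (m : M → ℝ) : ℝ :=
  sSup {r : ℝ | ∃ f : M → ℝ, LipschitzWith 1 f ∧ r = ∑ p, m p * f p}

/-- Molecules: the underlying vector space of the Lipschitz free space on a finite space;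
equipped with `freeNorm` it is the Lipschitz free space `F(M)`. -/
def molecules (M : Type*) [Fintype M] : Submodule ℝ (M → ℝ) where
  carrier := {m | ∑ p, m p = 0}
  add_mem' := by
    intro a b ha hb
    simp only [Set.mem_setOf_eq, Pi.add_apply, Finset.sum_add_distrib] at *
    rw [ha, hb]; ring
  zero_mem' := by simp
  smul_mem' := by
    intro c a ha
    simp only [Set.mem_setOf_eq, Pi.smul_apply, smul_eq_mul, ← Finset.mul_sum] at *
    rw [ha]; ring

/-- The norm of `ℓ₁^k`. -/
def l1norm {k : ℕ} (x : Fin k → ℝ) : ℝ := ∑ i, |x i|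

/-- Edge set of the `n`-th binary diamond graph: each edge spawns 4 edges. -/
def DE : ℕ → Type
  | 0 => Unit
  | n + 1 => DE n × Fin 4

/-- Vertex set of the `n`-th binary diamond graph: two new vertices per old edge. -/
def DV : ℕ → Type
  | 0 => Fin 2
  | n + 1 => DV n ⊕ DE n × Fin 2

def deDecEq : ∀ n, DecidableEq (DE n)
  | 0 => inferInstanceAs (DecidableEq Unit)
  | n + 1 => letI := deDecEq n; inferInstanceAs (DecidableEq (DE n × Fin 4))

instance (n : ℕ) : DecidableEq (DE n) := deDecEq n

def deFintype : ∀ n, Fintype (DE n)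
  | 0 => inferInstanceAs (Fintype Unit)
  | n + 1 => letI := deFintype n; inferInstanceAs (Fintype (DE n × Fin 4))

instance (n : ℕ) : Fintype (DE n) := deFintype n

def dvDecEq : ∀ n, DecidableEq (DV n)
  | 0 => inferInstanceAs (DecidableEq (Fin 2))
  | n + 1 => letI := dvDecEq n; letI := deDecEq n
              inferInstanceAs (DecidableEq (DV n ⊕ DE n × Fin 2))

instance (n : ℕ) : DecidableEq (DV n) := dvDecEq n

def dvFintype : ∀ n, Fintype (DV n)
  | 0 => inferInstanceAs (Fintype (Fin 2))
  | n + 1 => letI := dvFintype n; letI := deFintype n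
              inferInstanceAs (Fintype (DV n ⊕ DE n × Fin 2))

instance (n : ℕ) : Fintype (DV n) := dvFintype n

/-- Endpoints of the edges of the diamond graph `D_n`; each edge `e = (u,v)`
(`u` the endpoint nearer the top) of `D_{n-1}` is replaced by the quadrilateral
`u, a, v, b` with edges `u a`, `a v`, `b v`, `u b`, each oriented downwards
(first coordinate nearer the top). `D_0` is a single edge `(0,1)` (`0` the top). -/
def ends : ∀ n, DE n → DV n × DV n
  | 0, _ => ((0 : Fin 2), (1 : Fin 2))
  | n + 1, (e, i) =>
      let u : DV (n + 1) := Sum.inl (ends n e).1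
      let v : DV (n + 1) := Sum.inl (ends n e).2
      let a : DV (n + 1) := Sum.inr (e, (0 : Fin 2))
      let b : DV (n + 1) := Sum.inr (e, (1 : Fin 2))
      if i.val = 0 then (u, a)
      else if i.val = 1 then (a, v)
      else if i.val = 2 then (b, v)
      else (u, b)

/-- The `n`-th binary diamond graph `D_n` (as an undirected simple graph). -/
def DG (n : ℕ) : SimpleGraph (DV n) where
  Adj x y := x ≠ y ∧ ∃ e : DE n, ends n e = (x, y) ∨ ends n e = (y, x)
  symm := by
    constructor
    intro x y h
    obtain ⟨hxy, e, he⟩ := h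
    exact ⟨hxy.symm, e, he.symm⟩
  loopless := by
    constructor
    intro x h
    exact h.1 rfl

/-- The cycle space `Z(D_n)` of the diamond graph: the space of circulations, i.e. the
kernel of the boundary operator. Over `ℝ` this is exactly the linear span of the signed
indicator functions of the cycles of `D_n` (w.r.t. the orientation given by `ends`). -/
def cycleSpace (n : ℕ) : Submodule ℝ (DE n → ℝ) where
  carrier := {f | ∀ v : DV n,
    ∑ e : DE n, f e * ((if (ends n e).2 = v then (1 : ℝ) else 0) -
      (if (ends n e).1 = v then (1 : ℝ) else 0)) = 0}
  add_mem' := by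
    intro a b ha hb
    intro v
    simp only [Pi.add_apply, add_mul]
    rw [Finset.sum_add_distrib, ha v, hb v]
    ring
  zero_mem' := by
    intro v
    simp
  smul_mem' := by
    intro c a ha
    intro v
    simp only [Pi.smul_apply, smul_eq_mul, mul_assoc]
    rw [← Finset.mul_sum, ha v, mul_zero]

/-- The `ℓ₁(E(D_n))` norm on the edge space. -/
def e1norm {n : ℕ} (f : DE n → ℝ) : ℝ := ∑ e, |f e|

/-! ### Auxiliary material for the proof -/

/-- A default element of `DE m`. -/
def deElem : ∀ m, DE m
  | 0 => ()
  | m + 1 => (deElem m, 0)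

lemma card_DE : ∀ m, Fintype.card (DE m) = 4 ^ m
  | 0 => rfl
  | m + 1 => by
    show Fintype.card (DE m × Fin 4) = _
    rw [Fintype.card_prod, card_DE m, Fintype.card_fin]
    ring

/-- The "new vertices" index set at step `m+1`. -/
abbrev DW (m : ℕ) := DE m × Fin 2

/-- The molecule associated to a new vertex `w`. -/
noncomputable def molD (m : ℕ) (w : DW m) : DV (m + 1) → ℝ := fun p =>
  (@ite _ (p = Sum.inr w) (instDecidableEqDV (m + 1) p (Sum.inr w)) (1 : ℝ) 0)
    - (1 / 2) * (@ite _ (p = Sum.inl (ends m w.1).1)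
      (instDecidableEqDV (m + 1) p (Sum.inl (ends m w.1).1)) (1 : ℝ) 0)
    - (1 / 2) * (@ite _ (p = Sum.inl (ends m w.1).2)
      (instDecidableEqDV (m + 1) p (Sum.inl (ends m w.1).2)) (1 : ℝ) 0)

lemma sum_molD_mul (m : ℕ) (w : DW m) (f : DV (m + 1) → ℝ) :
    ∑ p, molD m w p * f p =
      f (Sum.inr w) - (1 / 2) * f (Sum.inl (ends m w.1).1)
        - (1 / 2) * f (Sum.inl (ends m w.1).2) := by
  have key : ∀ a : DV (m + 1), ∑ p, (if p = a then (1 : ℝ) else 0) * f p = f a := by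
    intro a
    rw [Finset.sum_eq_single a]
    · simp
    · intro b _ hb; simp [hb]
    · intro h; exact absurd (Finset.mem_univ a) h
  simp only [molD, sub_mul, mul_assoc]
  rw [Finset.sum_sub_distrib, Finset.sum_sub_distrib, ← Finset.mul_sum, ← Finset.mul_sum]
  erw [key, key, key]

/-- The linear embedding of `ℝ^W` into functions on vertices. -/
noncomputable def molS (m : ℕ) : (DW m → ℝ) →ₗ[ℝ] (DV (m + 1) → ℝ) where
  toFun c := fun p => ∑ w, c w * molD m w p
  map_add' a b := by
    funext p
    simp [add_mul, Finset.sum_add_distrib]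
  map_smul' r a := by
    funext p
    simp [Finset.mul_sum, mul_assoc]

/-- Restriction to new vertices. -/
def molR (m : ℕ) : (DV (m + 1) → ℝ) →ₗ[ℝ] (DW m → ℝ) where
  toFun g := fun w => g (Sum.inr w)
  map_add' a b := rfl
  map_smul' r a := rfl

lemma molRS (m : ℕ) : Function.LeftInverse (molR m) (molS m) := by
  intro c
  funext w
  show ∑ w', c w' * molD m w' (Sum.inr w) = c w
  have : ∀ w' : DW m, molD m w' (Sum.inr w) = if w = w' then (1 : ℝ) else 0 := by
    intro w'
    by_cases h : w = w'
    · simp [molD, h]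
      rfl
    · simp only [molD]
      erw [if_neg (fun he => h (Sum.inr.inj he))]
      simp
      exact h
  simp only [this, mul_ite, mul_one, mul_zero]
  simp

lemma sum_molS_mul (m : ℕ) (c : DW m → ℝ) (f : DV (m + 1) → ℝ) :
    ∑ p, molS m c p * f p =
      ∑ w, c w * (f (Sum.inr w) - (1 / 2) * f (Sum.inl (ends m w.1).1)
        - (1 / 2) * f (Sum.inl (ends m w.1).2)) := by
  calc ∑ p, molS m c p * f p
      = ∑ p, ∑ w, c w * (molD m w p * f p) := by
        refine Finset.sum_congr rfl fun p _ => ?_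
        show (∑ w, c w * molD m w p) * f p = _
        rw [Finset.sum_mul]
        exact Finset.sum_congr rfl fun w _ => by ring
    _ = ∑ w, ∑ p, c w * (molD m w p * f p) := Finset.sum_comm
    _ = ∑ w, c w * ∑ p, molD m w p * f p := by
        simp [Finset.mul_sum]
    _ = _ := by
        refine Finset.sum_congr rfl fun w _ => ?_
        rw [sum_molD_mul m w f]

/-- Each new vertex is adjacent to the top endpoint of its parent edge. -/
lemma adj_u (m : ℕ) (w : DW m) :
    (DG (m + 1)).Adj (Sum.inr w) (Sum.inl (ends m w.1).1) := by
  obtain ⟨e, j⟩ := w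
  refine ⟨Sum.inr_ne_inl, ?_⟩
  fin_cases j
  · exact ⟨(e, 0), Or.inr rfl⟩
  · exact ⟨(e, 3), Or.inr rfl⟩

/-- Each new vertex is adjacent to the bottom endpoint of its parent edge. -/
lemma adj_v (m : ℕ) (w : DW m) :
    (DG (m + 1)).Adj (Sum.inr w) (Sum.inl (ends m w.1).2) := by
  obtain ⟨e, j⟩ := w
  refine ⟨Sum.inr_ne_inl, ?_⟩
  fin_cases j
  · exact ⟨(e, 1), Or.inl rfl⟩
  · exact ⟨(e, 2), Or.inl rfl⟩

/-- Every edge of `D_{m+1}` has an old vertex among its endpoints. -/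
lemma ends_has_inl (m : ℕ) (E : DE (m + 1)) :
    (∃ q, (ends (m + 1) E).1 = Sum.inl q) ∨ (∃ q, (ends (m + 1) E).2 = Sum.inl q) := by
  obtain ⟨e, i⟩ := E
  fin_cases i <;> simp [ends] <;> exact ⟨_, rfl⟩

/-- No two new vertices are adjacent. -/
lemma not_adj_inr (m : ℕ) (w w' : DW m) :
    ¬ (DG (m + 1)).Adj (Sum.inr w) (Sum.inr w') := by
  rintro ⟨hne, E, hE | hE⟩ <;>
  · rcases ends_has_inl m E with ⟨q, hq⟩ | ⟨q, hq⟩ <;>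
      rw [hE] at hq <;> simp at hq

/-- `F(D_n)` contains a `1`-complemented subspace linearly isometric to
`ℓ₁^k` with `k = 2·4^{n-1}`. -/
theorem stmt7 (n : ℕ) (hn : 1 ≤ n) [MetricSpace (DV n)]
    (hdist : ∀ x y : DV n, dist x y = ((DG n).dist x y : ℝ)) :
    ∃ Y : Submodule ℝ (DV n → ℝ), Y ≤ molecules (DV n) ∧
      (∃ T : Y ≃ₗ[ℝ] (Fin (2 * 4 ^ (n - 1)) → ℝ),
        ∀ u : Y, freeNorm (DV n) u = l1norm (T u)) ∧
      (∃ P : (DV n → ℝ) →ₗ[ℝ] (DV n → ℝ),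
        (∀ m ∈ molecules (DV n), P m ∈ Y) ∧ (∀ u ∈ Y, P u = u) ∧
        ∀ m ∈ molecules (DV n), freeNorm (DV n) (P m) ≤ freeNorm (DV n) m) := by
  obtain ⟨m, rfl⟩ : ∃ m, n = m + 1 := ⟨n - 1, (Nat.succ_pred_eq_of_pos hn).symm⟩
  clear hn
  -- distance facts
  have hdpos : ∀ x y : DV (m + 1), x ≠ y → (1 : ℝ) ≤ dist x y := by
    intro x y hxy
    rw [hdist]
    have h0 : (DG (m + 1)).dist x y ≠ 0 := by
      intro h
      exact hxy (dist_eq_zero.mp (by rw [hdist, h]; norm_num))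
    exact_mod_cast Nat.one_le_iff_ne_zero.mpr h0
  have hge2 : ∀ (w w' : DW m) (x y : DV (m + 1)), x = Sum.inr w → y = Sum.inr w' →
      x ≠ y → (2 : ℝ) ≤ dist x y := by
    intro w w' x y hx hy hne
    subst hx; subst hy
    rw [hdist (Sum.inr w) (Sum.inr w')]
    have h0 : (DG (m + 1)).dist (Sum.inr w) (Sum.inr w') ≠ 0 := by
      intro h
      exact hne (dist_eq_zero.mp (by rw [hdist (Sum.inr w) (Sum.inr w'), h]; norm_num))
    have h1 : (DG (m + 1)).dist (Sum.inr w) (Sum.inr w') ≠ 1 := by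
      intro h
      exact not_adj_inr m w w' (SimpleGraph.dist_eq_one_iff_adj.mp h)
    have h2 : 2 ≤ (DG (m + 1)).dist (Sum.inr w) (Sum.inr w') := by omega
    exact_mod_cast h2
  have hdle1 : ∀ x y : DV (m + 1), (DG (m + 1)).Adj x y → dist x y ≤ 1 := by
    intro x y h
    rw [hdist]
    have h1 := SimpleGraph.dist_le h.toWalk
    simp only [SimpleGraph.Adj.toWalk, SimpleGraph.Walk.length_cons,
      SimpleGraph.Walk.length_nil, zero_add] at h1
    exact_mod_cast h1
  -- upper bound for arbitrary Lipschitz functionals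
  have keyA : ∀ (c : DW m → ℝ) (f : DV (m + 1) → ℝ), LipschitzWith 1 f →
      ∑ p, molS m c p * f p ≤ ∑ w, |c w| := by
    intro c f hf
    rw [sum_molS_mul]
    refine Finset.sum_le_sum fun w _ => ?_
    have hfd : ∀ x y : DV (m + 1), |f x - f y| ≤ dist x y := by
      intro x y
      have h := hf.dist_le_mul x y
      rwa [Real.dist_eq, NNReal.coe_one, one_mul] at h
    have hu : |f (Sum.inr w) - f (Sum.inl (ends m w.1).1)| ≤ 1 :=
      le_trans (hfd _ _) (hdle1 _ _ (adj_u m w))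
    have hv : |f (Sum.inr w) - f (Sum.inl (ends m w.1).2)| ≤ 1 :=
      le_trans (hfd _ _) (hdle1 _ _ (adj_v m w))
    have habs : |f (Sum.inr w) - 1 / 2 * f (Sum.inl (ends m w.1).1)
        - 1 / 2 * f (Sum.inl (ends m w.1).2)| ≤ 1 := by
      have hrw : f (Sum.inr w) - 1 / 2 * f (Sum.inl (ends m w.1).1)
          - 1 / 2 * f (Sum.inl (ends m w.1).2)
          = (1 / 2) * (f (Sum.inr w) - f (Sum.inl (ends m w.1).1))
            + (1 / 2) * (f (Sum.inr w) - f (Sum.inl (ends m w.1).2)) := by ring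
      rw [hrw]
      calc |(1 / 2) * (f (Sum.inr w) - f (Sum.inl (ends m w.1).1))
            + (1 / 2) * (f (Sum.inr w) - f (Sum.inl (ends m w.1).2))|
          ≤ |(1 / 2) * (f (Sum.inr w) - f (Sum.inl (ends m w.1).1))|
            + |(1 / 2) * (f (Sum.inr w) - f (Sum.inl (ends m w.1).2))| := abs_add_le _ _
        _ = (1 / 2) * |f (Sum.inr w) - f (Sum.inl (ends m w.1).1)|
            + (1 / 2) * |f (Sum.inr w) - f (Sum.inl (ends m w.1).2)| := by
            rw [abs_mul, abs_mul, abs_div, abs_one, abs_two]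
        _ ≤ (1 / 2) * 1 + (1 / 2) * 1 := by gcongr
        _ = 1 := by norm_num
    calc c w * (f (Sum.inr w) - 1 / 2 * f (Sum.inl (ends m w.1).1)
          - 1 / 2 * f (Sum.inl (ends m w.1).2))
        ≤ |c w * (f (Sum.inr w) - 1 / 2 * f (Sum.inl (ends m w.1).1)
          - 1 / 2 * f (Sum.inl (ends m w.1).2))| := le_abs_self _
      _ = |c w| * |f (Sum.inr w) - 1 / 2 * f (Sum.inl (ends m w.1).1)
          - 1 / 2 * f (Sum.inl (ends m w.1).2)| := abs_mul _ _
      _ ≤ |c w| * 1 := mul_le_mul_of_nonneg_left habs (abs_nonneg _)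
      _ = |c w| := mul_one _
  -- the sign functional
  have keyB : ∀ c : DW m → ℝ, ∃ f : DV (m + 1) → ℝ, LipschitzWith 1 f ∧
      (∀ q, f (Sum.inl q) = 0) ∧ (∀ w, c w * f (Sum.inr w) = |c w|) := by
    intro c
    refine ⟨(Sum.elim (fun _ => (0 : ℝ)) (fun w => if 0 ≤ c w then (1 : ℝ) else -1) :
        DV (m + 1) → ℝ), ?_, fun q => rfl, ?_⟩
    · set f : DV (m + 1) → ℝ :=
        Sum.elim (fun _ => (0 : ℝ)) (fun w => if 0 ≤ c w then (1 : ℝ) else -1) with hfdef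
      have hb : ∀ p, |f p| ≤ 1 := by
        rintro (q | w)
        · simp [hfdef]
        · by_cases h : 0 ≤ c w <;> simp [hfdef, h]
      apply LipschitzWith.of_dist_le_mul
      intro x y
      rw [NNReal.coe_one, one_mul, Real.dist_eq]
      by_cases hxy : x = y
      · subst hxy; simp [dist_nonneg]
      rcases x with q | w <;> rcases y with q' | w'
      · have hz : |f (Sum.inl q) - f (Sum.inl q')| = 0 := by simp [hfdef]
        rw [hz]
        exact dist_nonneg
      · have h1 : |f (Sum.inl q) - f (Sum.inr w')| ≤ 1 := by
          have : |f (Sum.inl q) - f (Sum.inr w')| = |f (Sum.inr w')| := by simp [hfdef]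
          rw [this]; exact hb _
        exact le_trans h1 (hdpos _ _ hxy)
      · have h1 : |f (Sum.inr w) - f (Sum.inl q')| ≤ 1 := by
          have : |f (Sum.inr w) - f (Sum.inl q')| = |f (Sum.inr w)| := by simp [hfdef]
          rw [this]; exact hb _
        exact le_trans h1 (hdpos _ _ hxy)
      · have h1 : |f (Sum.inr w) - f (Sum.inr w')| ≤ 2 := by
          calc |f (Sum.inr w) - f (Sum.inr w')|
              ≤ |f (Sum.inr w)| + |f (Sum.inr w')| := abs_sub _ _
            _ ≤ 1 + 1 := add_le_add (hb _) (hb _)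
            _ = 2 := by norm_num
        exact le_trans h1 (hge2 w w' _ _ rfl rfl hxy)
    · intro w
      by_cases h : 0 ≤ c w
      · simp [h, abs_of_nonneg h]
      · simp only [Sum.elim_inr, if_neg h]
        rw [abs_of_neg (lt_of_not_ge h)]
        ring
  -- boundedness of the dual set for molecules
  have hBdd : ∀ mm : DV (m + 1) → ℝ, mm ∈ molecules (DV (m + 1)) →
      BddAbove {r : ℝ | ∃ f, LipschitzWith 1 f ∧ r = ∑ p, mm p * f p} := by
    intro mm hmm
    have hsum : ∑ p, mm p = 0 := hmm
    set p₀ : DV (m + 1) := Sum.inr (deElem m, 0) with hp₀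
    refine ⟨(∑ p, |mm p|) * (∑ q, dist q p₀), ?_⟩
    rintro r ⟨f, hf, rfl⟩
    have h1 : ∑ p, mm p * f p = ∑ p, mm p * (f p - f p₀) := by
      have h2 : ∑ p, mm p * (f p - f p₀) = ∑ p, mm p * f p - (∑ p, mm p) * f p₀ := by
        rw [Finset.sum_mul, ← Finset.sum_sub_distrib]
        exact Finset.sum_congr rfl fun p _ => by ring
      rw [h2, hsum]
      ring
    rw [h1]
    calc ∑ p, mm p * (f p - f p₀) ≤ ∑ p, |mm p| * dist p p₀ := by
          refine Finset.sum_le_sum fun p _ => ?_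
          have h2 : |f p - f p₀| ≤ dist p p₀ := by
            have h3 := hf.dist_le_mul p p₀
            rwa [Real.dist_eq, NNReal.coe_one, one_mul] at h3
          calc mm p * (f p - f p₀) ≤ |mm p * (f p - f p₀)| := le_abs_self _
            _ = |mm p| * |f p - f p₀| := abs_mul _ _
            _ ≤ |mm p| * dist p p₀ := mul_le_mul_of_nonneg_left h2 (abs_nonneg _)
      _ ≤ ∑ p, |mm p| * ∑ q, dist q p₀ := by
          refine Finset.sum_le_sum fun p _ => ?_
          exact mul_le_mul_of_nonneg_left
            (Finset.single_le_sum (f := fun q => dist q p₀) (fun q _ => dist_nonneg) (Finset.mem_univ p)) (abs_nonneg _)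
      _ = (∑ p, |mm p|) * ∑ q, dist q p₀ := by rw [← Finset.sum_mul]
  -- molecules
  have hMol : ∀ c, molS m c ∈ molecules (DV (m + 1)) := by
    intro c
    show ∑ p, molS m c p = 0
    have h := sum_molS_mul m c (fun _ => 1)
    simp only [mul_one] at h
    rw [h]
    norm_num
  -- the exact norm computation
  have hNorm : ∀ c : DW m → ℝ, freeNorm (DV (m + 1)) (molS m c) = ∑ w, |c w| := by
    intro c
    apply le_antisymm
    · apply Real.sSup_le
      · rintro r ⟨f, hf, rfl⟩
        exact keyA c f hf
      · exact Finset.sum_nonneg fun w _ => abs_nonneg _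
    · obtain ⟨f, hf, hf0, hfs⟩ := keyB c
      have hr : ∑ w, |c w| = ∑ p, molS m c p * f p := by
        rw [sum_molS_mul]
        refine Finset.sum_congr rfl fun w _ => ?_
        rw [hf0, hf0]
        rw [← hfs w]
        ring
      exact le_csSup (hBdd _ (hMol c)) ⟨f, hf, hr⟩
  -- key lower bound for the projection
  have hProj : ∀ mm : DV (m + 1) → ℝ, mm ∈ molecules (DV (m + 1)) →
      ∑ w, |molR m mm w| ≤ freeNorm (DV (m + 1)) mm := by
    intro mm hmm
    obtain ⟨f, hf, hf0, hfs⟩ := keyB (molR m mm)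
    have hsplit : ∑ p : DV (m + 1), mm p * f p
        = ∑ q : DV m, mm (Sum.inl q) * f (Sum.inl q)
          + ∑ w : DW m, mm (Sum.inr w) * f (Sum.inr w) :=
      Fintype.sum_sum_type _
    have hval : ∑ w, |molR m mm w| = ∑ p, mm p * f p := by
      rw [hsplit]
      have h1 : ∑ q : DV m, mm (Sum.inl q) * f (Sum.inl q) = 0 := by
        refine Finset.sum_eq_zero fun q _ => ?_
        rw [hf0, mul_zero]
      rw [h1, zero_add]
      refine Finset.sum_congr rfl fun w _ => ?_
      exact (hfs w).symm
    exact le_csSup (hBdd mm hmm) ⟨f, hf, hval⟩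
  -- cardinality
  have hcard : Fintype.card (DW m) = 2 * 4 ^ (m + 1 - 1) := by
    rw [Fintype.card_prod, card_DE m, Fintype.card_fin, Nat.add_sub_cancel]
    ring
  let eW : DW m ≃ Fin (2 * 4 ^ (m + 1 - 1)) := Fintype.equivFinOfCardEq hcard
  refine ⟨LinearMap.range (molS m), ?_, ?_, ?_⟩
  · rintro x ⟨c, rfl⟩
    exact hMol c
  · refine ⟨(LinearEquiv.ofLeftInverse (molRS m)).symm.trans
      (LinearEquiv.piCongrLeft' ℝ (fun _ => ℝ) eW), ?_⟩
    intro u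
    obtain ⟨c, hc⟩ := u.2
    have hu : (u : DV (m + 1) → ℝ) = molS m c := hc.symm
    have hcc : molR m (u : DV (m + 1) → ℝ) = c := by rw [hu]; exact molRS m c
    have hT : ((LinearEquiv.ofLeftInverse (molRS m)).symm.trans
        (LinearEquiv.piCongrLeft' ℝ (fun _ => ℝ) eW)) u = fun i => c (eW.symm i) := by
      show (LinearEquiv.piCongrLeft' ℝ (fun _ => ℝ) eW)
        ((LinearEquiv.ofLeftInverse (molRS m)).symm u) = _
      rw [LinearEquiv.ofLeftInverse_symm_apply]
      rw [show (molR m) (u : DV (m + 1) → ℝ) = c from hcc]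
      rfl
    rw [hT]
    have h2 : freeNorm (DV (m + 1)) (u : DV (m + 1) → ℝ) = ∑ w, |c w| := by
      rw [hu]; exact hNorm c
    rw [h2]
    show _ = ∑ i, |c (eW.symm i)|
    exact (Equiv.sum_comp eW.symm fun w => |c w|).symm
  · refine ⟨(molS m).comp (molR m), ?_, ?_, ?_⟩
    · intro mm _
      exact ⟨molR m mm, rfl⟩
    · rintro u ⟨c, rfl⟩
      show molS m (molR m (molS m c)) = molS m c
      rw [molRS m c]
    · intro mm hmm
      show freeNorm _ (molS m (molR m mm)) ≤ _
      rw [hNorm]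
      exact hProj mm hmm
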